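/- Let n ≥ 1 and let F be an upset of a De Morgan lattice L. Then F is a complete (respectively consistent) n-filter on L if and only if F is the intersection of a nonempty family of complete (respectively consistent) prime n-filters on L. -/

import Mathlib

/-- A De Morgan lattice: a distributive lattice with an antitone involution. -/
class DeMorgan (L : Type*) extends DistribLattice L where
  dneg : L → L
  dneg_dneg : ∀ x : L, dneg (dneg x) = x
  dneg_sup : ∀ x y : L, dneg (x ⊔ y) = dneg x ⊓ dneg y

prefix:max "∼" => DeMorgan.dneg

section Defs

variable {α : Type*}

/-- An upward closed subset of a lattice. -/
def IsUpset [Lattice α] (F : Set α) : Prop :=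
  ∀ ⦃x y : α⦄, x ∈ F → x ≤ y → y ∈ F

/-- A lattice filter: an upset closed under binary meets. -/
def IsLatFilter [Lattice α] (F : Set α) : Prop :=
  IsUpset F ∧ ∀ x y : α, x ∈ F → y ∈ F → x ⊓ y ∈ F

/-- An `n`-filter: an upset such that for every nonempty finite `Y`, if the meet of
every nonempty subset of `Y` of size at most `n` lies in `F`, then so does the meet of `Y`. -/
def IsNFilter [Lattice α] (n : ℕ) (F : Set α) : Prop :=
  IsUpset F ∧ ∀ (Y : Finset α) (hY : Y.Nonempty),
    (∀ (X : Finset α) (hX : X.Nonempty), X ⊆ Y → X.card ≤ n → X.inf' hX id ∈ F) →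
    Y.inf' hY id ∈ F

/-- A prime upset: `x ⊔ y ∈ F` implies `x ∈ F` or `y ∈ F`. -/
def IsPrimeUpset [Lattice α] (F : Set α) : Prop :=
  ∀ x y : α, x ⊔ y ∈ F → x ∈ F ∨ y ∈ F

/-- A downward closed subset of a lattice. -/
def IsDownset [Lattice α] (I : Set α) : Prop :=
  ∀ ⦃x y : α⦄, x ∈ I → y ≤ x → y ∈ I

/-- A lattice ideal: a downset closed under binary joins. -/
def IsIdeal [Lattice α] (I : Set α) : Prop :=
  IsDownset I ∧ ∀ x y : α, x ∈ I → y ∈ I → x ⊔ y ∈ I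

/-- An `n`-ideal: the order dual notion of an `n`-filter. -/
def IsNIdeal [Lattice α] (n : ℕ) (I : Set α) : Prop :=
  IsDownset I ∧ ∀ (Y : Finset α) (hY : Y.Nonempty),
    (∀ (X : Finset α) (hX : X.Nonempty), X ⊆ Y → X.card ≤ n → X.sup' hX id ∈ I) →
    Y.sup' hY id ∈ I

variable {L : Type*} [DeMorgan L]

/-- Almost complete upset: `x ∈ F` implies `x ⊓ (y ⊔ ∼y) ∈ F`. -/
def AlmostComplete (F : Set L) : Prop := ∀ x ∈ F, ∀ y : L, x ⊓ (y ⊔ ∼y) ∈ F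

/-- Complete upset: almost complete and nonempty. -/
def IsCompleteUpset (F : Set L) : Prop := AlmostComplete F ∧ F.Nonempty

/-- Almost consistent upset: `(x ⊓ ∼x) ⊔ y ∈ F` implies `y ∈ F`. -/
def AlmostConsistent (F : Set L) : Prop := ∀ x y : L, (x ⊓ ∼x) ⊔ y ∈ F → y ∈ F

/-- Consistent upset: almost consistent and not total. -/
def IsConsistentUpset (F : Set L) : Prop := AlmostConsistent F ∧ F ≠ Set.univ

/-- Classical upset: complete and consistent. -/
def IsClassicalUpset (F : Set L) : Prop := IsCompleteUpset F ∧ IsConsistentUpset F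

/-- Kalman upset. -/
def IsKalmanUpset (F : Set L) : Prop :=
  ∀ x y z u : L, ((x ⊓ ∼x) ⊓ z) ⊔ u ∈ F → ((y ⊔ ∼y) ⊓ z) ⊔ u ∈ F

/-- A homomorphism of De Morgan lattices. -/
def IsDMHom {L M : Type*} [DeMorgan L] [DeMorgan M] (h : L → M) : Prop :=
  (∀ x y : L, h (x ⊓ y) = h x ⊓ h y) ∧ (∀ x y : L, h (x ⊔ y) = h x ⊔ h y) ∧
    ∀ x : L, h (∼x) = ∼(h x)

/-- The filter generated by all elements of the form `x ⊔ ∼x`. -/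
def Fcomp (L : Type*) [DeMorgan L] : Set L :=
  {a | ∃ (s : Finset L) (hs : s.Nonempty), s.inf' hs (fun x => x ⊔ ∼x) ≤ a}

/-- The `n`-filter generated by a set. -/
def nFilterGen (n : ℕ) (U : Set L) : Set L :=
  ⋂₀ {F : Set L | IsNFilter n F ∧ U ⊆ F}

/-- `Comp U`. -/
def CompCl (U : Set L) : Set L := {x | ∃ a ∈ U, ∃ f ∈ Fcomp L, a ⊓ f ≤ x}

/-- `Cons U`. -/
def ConsCl (U : Set L) : Set L := {x | ∃ f ∈ Fcomp L, ∼f ⊔ x ∈ U}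

/-- A congruence of De Morgan lattices, as a binary relation. -/
def IsCongruence (θ : L → L → Prop) : Prop :=
  Equivalence θ ∧
  (∀ a b c d : L, θ a b → θ c d → θ (a ⊓ c) (b ⊓ d)) ∧
  (∀ a b c d : L, θ a b → θ c d → θ (a ⊔ c) (b ⊔ d)) ∧
  ∀ a b : L, θ a b → θ (∼a) (∼b)

end Defs

/-- The four-element De Morgan lattice `DM₁` on `Bool × Bool`. -/
instance : DeMorgan (Bool × Bool) :=
  { (inferInstance : DistribLattice (Bool × Bool)) with
    dneg := fun p => (!p.2, !p.1)
    dneg_dneg := by decide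
    dneg_sup := by decide }

/-- Powers of `DM₁`, with componentwise operations. -/
instance {ι : Type*} : DeMorgan (ι → Bool × Bool) :=
  { (inferInstance : DistribLattice (ι → Bool × Bool)) with
    dneg := fun f i => ∼(f i)
    dneg_dneg := fun f => funext fun i => DeMorgan.dneg_dneg (f i)
    dneg_sup := fun f g => funext fun i => DeMorgan.dneg_sup (f i) (g i) }

section NFilterHelpers

variable {α : Type*}

theorem isNFilter_univ [Lattice α] (n : ℕ) : IsNFilter n (Set.univ : Set α) :=
  ⟨fun _ _ _ _ => trivial, fun _ _ _ => trivial⟩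

theorem isNFilter_sInter [Lattice α] {n : ℕ} {S : Set (Set α)}
    (h : ∀ T ∈ S, IsNFilter n T) : IsNFilter n (⋂₀ S) := by
  constructor
  · intro x y hx hxy
    exact Set.mem_sInter.mpr fun T hT => (h T hT).1 (Set.mem_sInter.mp hx T hT) hxy
  · intro Y hY hX
    exact Set.mem_sInter.mpr fun T hT =>
      (h T hT).2 Y hY fun X hXne hXY hc => Set.mem_sInter.mp (hX X hXne hXY hc) T hT

theorem isNFilter_sUnion_chain [Lattice α] {n : ℕ} (hn : 1 ≤ n) {S : Set (Set α)}
    (hchain : IsChain (· ⊆ ·) S) (h : ∀ T ∈ S, IsNFilter n T) : IsNFilter n (⋃₀ S) := by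
  classical
  constructor
  · rintro x y ⟨T, hT, hxT⟩ hxy
    exact ⟨T, hT, (h T hT).1 hxT hxy⟩
  · intro Y hY hX
    set t : Finset (Finset α) := Y.powerset.filter (fun X => X ≠ ∅ ∧ X.card ≤ n) with ht
    have main : ∀ t' : Finset (Finset α), t' ⊆ t → t'.Nonempty →
        ∃ T ∈ S, ∀ X ∈ t', ∀ (hne : X.Nonempty), X.inf' hne id ∈ T := by
      intro t'
      induction t' using Finset.induction_on with
      | empty => intro _ hne; exact absurd hne (by simp)
      | @insert X₀ t'' hX₀ ih =>
        intro hsub _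
        have hX₀t : X₀ ∈ t := hsub (Finset.mem_insert_self _ _)
        rw [ht, Finset.mem_filter, Finset.mem_powerset] at hX₀t
        have hX₀ne : X₀.Nonempty := Finset.nonempty_of_ne_empty hX₀t.2.1
        obtain ⟨T₁, hT₁, hin₁⟩ := hX (X₀) hX₀ne hX₀t.1 hX₀t.2.2
        rcases t''.eq_empty_or_nonempty with he | hne'
        · subst he
          refine ⟨T₁, hT₁, ?_⟩
          intro X hXmem hne
          rw [Finset.mem_insert] at hXmem
          rcases hXmem with rfl | hXmem
          · exact hin₁
          · exact absurd hXmem (Finset.notMem_empty X)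
        · obtain ⟨T₂, hT₂, hin₂⟩ := ih (fun X hXm => hsub (Finset.mem_insert_of_mem hXm)) hne'
          rcases hchain.total hT₁ hT₂ with hle | hle
          · refine ⟨T₂, hT₂, ?_⟩
            intro X hXmem hne
            rw [Finset.mem_insert] at hXmem
            rcases hXmem with rfl | hXmem
            · exact hle hin₁
            · exact hin₂ X hXmem hne
          · refine ⟨T₁, hT₁, ?_⟩
            intro X hXmem hne
            rw [Finset.mem_insert] at hXmem
            rcases hXmem with rfl | hXmem
            · exact hin₁
            · exact hle (hin₂ X hXmem hne)
    obtain ⟨y₀, hy₀⟩ := id hY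
    have hsingle : ({y₀} : Finset α) ∈ t := by
      rw [ht, Finset.mem_filter, Finset.mem_powerset]
      exact ⟨Finset.singleton_subset_iff.mpr hy₀, by simp, by simpa using hn⟩
    obtain ⟨T, hT, hall⟩ := main t subset_rfl ⟨{y₀}, hsingle⟩
    refine ⟨T, hT, (h T hT).2 Y hY ?_⟩
    intro X hXne hXY hc
    refine hall X ?_ hXne
    rw [ht, Finset.mem_filter, Finset.mem_powerset]
    exact ⟨hXY, Finset.nonempty_iff_ne_empty.mp hXne, hc⟩

theorem finset_inf'_sup_const [DistribLattice α] (X : Finset α) (hne : X.Nonempty) (c : α) :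
    X.inf' hne (fun z => z ⊔ c) = X.inf' hne id ⊔ c := by
  induction hne using Finset.Nonempty.cons_induction with
  | singleton a => simp
  | cons a s ha hs ih => rw [Finset.inf'_cons, Finset.inf'_cons, ih, sup_inf_right]; rfl; exact hs

theorem exists_preimage_finset {β : Type*} [DecidableEq β] (f : α → β) (Y : Finset α)
    (X' : Finset β) (h : X' ⊆ Y.image f) :
    ∃ X : Finset α, X ⊆ Y ∧ X.image f = X' ∧ X.card ≤ X'.card := by
  classical
  choose g hg1 hg2 using fun (w : X') => Finset.mem_image.mp (h w.2)
  refine ⟨X'.attach.image g, ?_, ?_, ?_⟩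
  · intro z hz
    obtain ⟨w, _, rfl⟩ := Finset.mem_image.mp hz
    exact hg1 w
  · ext b
    simp only [Finset.image_image, Finset.mem_image, Finset.mem_attach, true_and,
      Subtype.exists, Function.comp_apply]
    constructor
    · rintro ⟨w, hw, rfl⟩
      rw [hg2 ⟨w, hw⟩]; exact hw
    · intro hb
      exact ⟨b, hb, hg2 ⟨b, hb⟩⟩
  · exact (Finset.card_image_le).trans (by simp)

theorem isNFilter_supPre [DistribLattice α] {n : ℕ} {G : Set α} (hG : IsNFilter n G) (c : α) :
    IsNFilter n {z | z ⊔ c ∈ G} := by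
  classical
  constructor
  · intro x y hx hxy
    exact hG.1 hx (sup_le_sup_right hxy c)
  · intro Y hY h
    have hY' : (Y.image (· ⊔ c)).Nonempty := hY.image _
    have key : (Y.image (· ⊔ c)).inf' hY' id ∈ G := by
      apply hG.2
      intro X' hX' hsub hcard
      obtain ⟨X, hXY, hXim, hXcard⟩ := exists_preimage_finset _ Y X' hsub
      have hXne : X.Nonempty := by
        rw [← Finset.image_nonempty (f := (· ⊔ c)), hXim]; exact hX'
      have hmem : X.inf' hXne id ⊔ c ∈ G := h X hXne hXY (hXcard.trans hcard)
      have e : X'.inf' hX' id = X.inf' hXne id ⊔ c := by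
        have : X'.inf' hX' id = (X.image (· ⊔ c)).inf' (by rw [hXim]; exact hX') id := by
          congr 1 <;> rw [hXim]
        rw [this, Finset.inf'_image]
        exact finset_inf'_sup_const X hXne c
      rwa [e]
    have e2 : (Y.image (· ⊔ c)).inf' hY' id = Y.inf' hY id ⊔ c := by
      rw [Finset.inf'_image]
      exact finset_inf'_sup_const Y hY c
    show Y.inf' hY id ⊔ c ∈ G
    rwa [e2] at key

end NFilterHelpers

section PrimeExt

theorem prime_ext {L : Type*} [DeMorgan L] (n : ℕ) (hn : 1 ≤ n) (Q : Set L → Prop)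
    (hQuniv : Q Set.univ)
    (hQInter : ∀ S : Set (Set L), (∀ T ∈ S, Q T) → Q (⋂₀ S))
    (hQUnion : ∀ S : Set (Set L), (∀ T ∈ S, Q T) → Q (⋃₀ S))
    (hQjoin : ∀ G : Set L, IsUpset G → Q G → ∀ c : L, Q {z | z ⊔ c ∈ G})
    {F : Set L} (hF : IsNFilter n F) (hQF : Q F) {a : L} (ha : a ∉ F) :
    ∃ G : Set L, IsNFilter n G ∧ Q G ∧ IsPrimeUpset G ∧ F ⊆ G ∧ a ∉ G := by
  classical
  set P : Set (Set L) := {T | IsNFilter n T ∧ Q T ∧ F ⊆ T ∧ a ∉ T} with hP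
  have hub : ∀ c ⊆ P, IsChain (· ⊆ ·) c → c.Nonempty → ∃ ub ∈ P, ∀ s ∈ c, s ⊆ ub := by
    intro c hcP hchain hcne
    refine ⟨⋃₀ c, ⟨isNFilter_sUnion_chain hn hchain (fun T hT => (hcP hT).1),
      hQUnion c (fun T hT => (hcP hT).2.1), ?_, ?_⟩, fun s hs => Set.subset_sUnion_of_mem hs⟩
    · obtain ⟨T₀, hT₀⟩ := hcne
      exact (hcP hT₀).2.2.1.trans (Set.subset_sUnion_of_mem hT₀)
    · rintro ⟨T, hT, haT⟩
      exact (hcP hT).2.2.2 haT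
  obtain ⟨G, hFG, hGmax⟩ := zorn_subset_nonempty P hub F ⟨hF, hQF, subset_rfl, ha⟩
  have hGP : G ∈ P := hGmax.1
  -- generation
  set gen : Set L → Set L := fun U => ⋂₀ {T | IsNFilter n T ∧ Q T ∧ U ⊆ T} with hgen
  have gen_sub : ∀ U : Set L, U ⊆ gen U := by
    intro U z hz
    exact Set.mem_sInter.mpr fun T hT => hT.2.2 hz
  have gen_nf : ∀ U : Set L, IsNFilter n (gen U) :=
    fun U => isNFilter_sInter fun T hT => hT.1
  have gen_Q : ∀ U : Set L, Q (gen U) :=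
    fun U => hQInter _ fun T hT => hT.2.1
  have gen_least : ∀ (U T : Set L), IsNFilter n T → Q T → U ⊆ T → gen U ⊆ T := by
    intro U T h1 h2 h3 z hz
    exact Set.mem_sInter.mp hz T ⟨h1, h2, h3⟩
  have step : ∀ x : L, x ∉ G → a ∈ gen (insert x G) := by
    intro x hx
    by_contra h'
    have hmem : gen (insert x G) ∈ P :=
      ⟨gen_nf _, gen_Q _, hGP.2.2.1.trans ((Set.subset_insert x G).trans (gen_sub _)), h'⟩
    have hle : G ⊆ gen (insert x G) := (Set.subset_insert x G).trans (gen_sub _)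
    have : gen (insert x G) ⊆ G := hGmax.2 hmem hle
    exact hx (this (gen_sub _ (Set.mem_insert x G)))
  have step2 : ∀ x c : L, x ⊔ c ∈ G → a ∈ gen (insert x G) → a ⊔ c ∈ G := by
    intro x c hxc hmem
    have hsub : insert x G ⊆ {z | z ⊔ c ∈ G} := by
      rintro z (rfl | hz)
      · exact hxc
      · exact hGP.1.1 hz le_sup_left
    exact gen_least _ _ (isNFilter_supPre hGP.1 c) (hQjoin G hGP.1.1 hGP.2.1 c) hsub hmem
  refine ⟨G, hGP.1, hGP.2.1, ?_, hGP.2.2.1, hGP.2.2.2⟩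
  intro x y hxy
  by_contra h
  push_neg at h
  obtain ⟨hx, hy⟩ := h
  have h1 : a ⊔ y ∈ G := step2 x y hxy (step x hx)
  have h2 : a ⊔ a ∈ G := step2 y a (by rwa [sup_comm]) (step y hy)
  rw [sup_idem] at h2
  exact hGP.2.2.2 h2

end PrimeExt

section CompConsHelpers

variable {L : Type*} [DeMorgan L]

theorem almostComplete_univ : AlmostComplete (Set.univ : Set L) := fun _ _ _ => trivial

theorem almostComplete_sInter (S : Set (Set L)) (h : ∀ T ∈ S, AlmostComplete T) :
    AlmostComplete (⋂₀ S) := fun x hx y =>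
  Set.mem_sInter.mpr fun T hT => h T hT x (Set.mem_sInter.mp hx T hT) y

theorem almostComplete_sUnion (S : Set (Set L)) (h : ∀ T ∈ S, AlmostComplete T) :
    AlmostComplete (⋃₀ S) := by
  rintro x ⟨T, hT, hxT⟩ y
  exact ⟨T, hT, h T hT x hxT y⟩

theorem almostComplete_supPre (G : Set L) (hup : IsUpset G) (h : AlmostComplete G) (c : L) :
    AlmostComplete {z | z ⊔ c ∈ G} := by
  intro z hz y
  show (z ⊓ (y ⊔ ∼y)) ⊔ c ∈ G
  have h1 : (z ⊔ c) ⊓ (y ⊔ ∼y) ∈ G := h _ hz y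
  refine hup h1 ?_
  rw [inf_sup_right]
  exact sup_le_sup_left inf_le_left _

theorem almostConsistent_univ : AlmostConsistent (Set.univ : Set L) := fun _ _ _ => trivial

theorem almostConsistent_sInter (S : Set (Set L)) (h : ∀ T ∈ S, AlmostConsistent T) :
    AlmostConsistent (⋂₀ S) := fun x y hxy =>
  Set.mem_sInter.mpr fun T hT => h T hT x y (Set.mem_sInter.mp hxy T hT)

theorem almostConsistent_sUnion (S : Set (Set L)) (h : ∀ T ∈ S, AlmostConsistent T) :
    AlmostConsistent (⋃₀ S) := by
  rintro x y ⟨T, hT, hxT⟩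
  exact ⟨T, hT, h T hT x y hxT⟩

theorem almostConsistent_supPre (G : Set L) (hup : IsUpset G) (h : AlmostConsistent G) (c : L) :
    AlmostConsistent {z | z ⊔ c ∈ G} := by
  intro x z hxz
  have : (x ⊓ ∼x) ⊔ (z ⊔ c) ∈ G := by
    rw [← sup_assoc]; exact hxz
  exact h x (z ⊔ c) this

end CompConsHelpers

universe u

/-- complete (resp. consistent) `n`-filters on a De Morgan lattice are
precisely the intersections of nonempty families of complete (resp. consistent) prime
`n`-filters. -/
theorem statement18 {L : Type u} [DeMorgan L] [Nonempty L] (n : ℕ) (hn : 1 ≤ n)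
    (F : Set L) (hF : IsUpset F) :
    ((IsCompleteUpset F ∧ IsNFilter n F) ↔
      ∃ (ι : Type u) (_ : Nonempty ι) (G : ι → Set L),
        (∀ i : ι, IsCompleteUpset (G i) ∧ IsPrimeUpset (G i) ∧ IsNFilter n (G i)) ∧
        F = ⋂ i : ι, G i) ∧
    ((IsConsistentUpset F ∧ IsNFilter n F) ↔
      ∃ (ι : Type u) (_ : Nonempty ι) (G : ι → Set L),
        (∀ i : ι, IsConsistentUpset (G i) ∧ IsPrimeUpset (G i) ∧ IsNFilter n (G i)) ∧
        F = ⋂ i : ι, G i) := by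
  classical
  constructor
  · -- complete case
    constructor
    · rintro ⟨⟨hac, hne⟩, hnf⟩
      by_cases hFu : F = Set.univ
      · refine ⟨L, ‹Nonempty L›, fun _ => Set.univ,
          fun _ => ⟨⟨almostComplete_univ, ⟨Classical.arbitrary L, trivial⟩⟩,
            fun _ _ _ => Or.inl trivial, isNFilter_univ n⟩, ?_⟩
        simp [hFu]
      · have hι : Nonempty {a : L // a ∉ F} := by
          obtain ⟨a, ha⟩ := (Set.ne_univ_iff_exists_notMem F).mp hFu
          exact ⟨⟨a, ha⟩⟩
        have hsep : ∀ a : {a : L // a ∉ F}, ∃ G : Set L,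
            IsNFilter n G ∧ AlmostComplete G ∧ IsPrimeUpset G ∧ F ⊆ G ∧ (a : L) ∉ G :=
          fun a => prime_ext n hn AlmostComplete almostComplete_univ
            almostComplete_sInter almostComplete_sUnion almostComplete_supPre hnf hac a.2
        choose G hG1 hG2 hG3 hG4 hG5 using hsep
        refine ⟨{a : L // a ∉ F}, hι, G,
          fun i => ⟨⟨hG2 i, hne.mono (hG4 i)⟩, hG3 i, hG1 i⟩, ?_⟩
        apply Set.Subset.antisymm
        · exact Set.subset_iInter hG4
        · intro z hz
          by_contra hzF
          exact hG5 ⟨z, hzF⟩ (Set.mem_iInter.mp hz ⟨z, hzF⟩)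
    · rintro ⟨ι, hι, G, hG, rfl⟩
      refine ⟨⟨?_, ?_⟩, ?_⟩
      · intro x hx y
        exact Set.mem_iInter.mpr fun i => (hG i).1.1 x (Set.mem_iInter.mp hx i) y
      · obtain ⟨b⟩ := ‹Nonempty L›
        refine ⟨b ⊔ ∼b, Set.mem_iInter.mpr fun i => ?_⟩
        obtain ⟨w, hw⟩ := (hG i).1.2
        exact ((hG i).2.2.1 ((hG i).1.1 w hw b) inf_le_right)
      · rw [← Set.sInter_range]
        apply isNFilter_sInter
        rintro T ⟨i, rfl⟩
        exact (hG i).2.2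
  · -- consistent case
    constructor
    · rintro ⟨⟨hac, hneu⟩, hnf⟩
      have hι : Nonempty {a : L // a ∉ F} := by
        obtain ⟨a, ha⟩ := (Set.ne_univ_iff_exists_notMem F).mp hneu
        exact ⟨⟨a, ha⟩⟩
      have hsep : ∀ a : {a : L // a ∉ F}, ∃ G : Set L,
          IsNFilter n G ∧ AlmostConsistent G ∧ IsPrimeUpset G ∧ F ⊆ G ∧ (a : L) ∉ G :=
        fun a => prime_ext n hn AlmostConsistent almostConsistent_univ
          almostConsistent_sInter almostConsistent_sUnion almostConsistent_supPre hnf hac a.2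
      choose G hG1 hG2 hG3 hG4 hG5 using hsep
      refine ⟨{a : L // a ∉ F}, hι, G, fun i =>
        ⟨⟨hG2 i, (Set.ne_univ_iff_exists_notMem _).mpr ⟨(i : L), hG5 i⟩⟩, hG3 i, hG1 i⟩, ?_⟩
      apply Set.Subset.antisymm
      · exact Set.subset_iInter hG4
      · intro z hz
        by_contra hzF
        exact hG5 ⟨z, hzF⟩ (Set.mem_iInter.mp hz ⟨z, hzF⟩)
    · rintro ⟨ι, hι, G, hG, rfl⟩
      refine ⟨⟨?_, ?_⟩, ?_⟩
      · intro x y hxy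
        exact Set.mem_iInter.mpr fun i => (hG i).1.1 x y (Set.mem_iInter.mp hxy i)
      · obtain ⟨i⟩ := hι
        obtain ⟨a, ha⟩ := (Set.ne_univ_iff_exists_notMem _).mp (hG i).1.2
        intro h
        exact ha (Set.mem_iInter.mp (h ▸ (Set.mem_univ a)) i)
      · rw [← Set.sInter_range]
        apply isNFilter_sInter
        rintro T ⟨i, rfl⟩
        exact (hG i).2.2
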